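/- Let t₁, …, t_{n-1} be nonzero real numbers and let M be the n×n matrix with entries m_{i,j} = t_{min(i,j)} for i ≠ j and m_{i,i} = 0. Then M has rank at least n − 1. -/

import Mathlib

/-- Let t₁,…,t_{n−1} be nonzero reals and M the n×n matrix with
m_{ij} = t_{min(i,j)} for i ≠ j and 0 on the diagonal. Then rank M ≥ n − 1. -/
theorem stmt18 (n : ℕ) (t : ℕ → ℝ) (ht : ∀ i, i < n - 1 → t i ≠ 0) :
    n - 1 ≤
      (Matrix.of fun i j : Fin n =>
        if i = j then (0 : ℝ) else t (min i.1 j.1) : Matrix (Fin n) (Fin n) ℝ).rank := by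
  rcases Nat.eq_zero_or_pos n with rfl | hn
  · simp
  set m := n - 1 with hm
  have hmn : m < n := Nat.sub_lt hn one_pos
  set M : Matrix (Fin n) (Fin n) ℝ :=
    (Matrix.of fun i j : Fin n => if i = j then (0 : ℝ) else t (min i.1 j.1)) with hM
  -- embeddings
  have hlt : ∀ k : Fin m, (k : ℕ) + 1 < n := fun k => by omega
  set e0 : Fin m → Fin n := fun k => ⟨k, lt_trans k.2 hmn⟩ with he0
  set e1 : Fin m → Fin n := fun k => ⟨k + 1, hlt k⟩ with he1
  -- row selection and column difference matrices
  set R : Matrix (Fin m) (Fin n) ℝ := fun i j => if j = e0 i then 1 else 0 with hR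
  set C : Matrix (Fin n) (Fin m) ℝ :=
    fun j k => (if j = e1 k then (1 : ℝ) else 0) - (if j = e0 k then 1 else 0) with hC
  set D : Matrix (Fin m) (Fin m) ℝ := R * M * C with hD
  have hDentry : ∀ i k, D i k = M (e0 i) (e1 k) - M (e0 i) (e0 k) := by
    intro i k
    have hRM : ∀ j, (R * M) i j = M (e0 i) j := fun j => by
      rw [Matrix.mul_apply]
      simp [Matrix.mul_apply, hR, ite_mul, Finset.sum_ite_eq, Finset.sum_ite_eq']
    calc D i k = ∑ j, (R * M) i j * C j k := by rw [hD, Matrix.mul_apply]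
      _ = ∑ j, M (e0 i) j * C j k := by simp [hRM]
      _ = M (e0 i) (e1 k) - M (e0 i) (e0 k) := by
          simp [hC, mul_sub, Finset.sum_sub_distrib, mul_ite, Finset.sum_ite_eq,
            Finset.sum_ite_eq']
  have hdiag : ∀ k, D k k = t k := by
    intro k
    rw [hDentry]
    have h1 : e0 k ≠ e1 k := by simp [he0, he1, Fin.ext_iff]
    simp [hM, h1, he0, he1]
  have htri : D.BlockTriangular OrderDual.toDual := by
    intro i k h
    have hik : (i : ℕ) < k := h
    rw [hDentry]
    have h1 : e0 i ≠ e1 k := by simp [he0, he1, Fin.ext_iff]; omega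
    have h2 : e0 i ≠ e0 k := by simp [he0, Fin.ext_iff]; omega
    have ha : min (i : ℕ) ((k : ℕ) + 1) = i := by omega
    have hb : min (i : ℕ) (k : ℕ) = i := by omega
    simp [hM, h1, h2, he0, he1, ha, hb]
    rw [if_neg (by omega), if_neg (by omega), sub_self]
  have hdet : D.det ≠ 0 := by
    rw [Matrix.det_of_lowerTriangular D htri]
    exact Finset.prod_ne_zero_iff.2 fun k _ => by rw [hdiag]; exact ht k k.2
  have hrankD : D.rank = m := by
    rw [Matrix.rank_of_isUnit]
    · simp
    · exact (Matrix.isUnit_iff_isUnit_det D).2 (isUnit_iff_ne_zero.2 hdet)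
  calc (m : ℕ) = D.rank := hrankD.symm
    _ ≤ (R * M).rank := Matrix.rank_mul_le_left _ _
    _ ≤ M.rank := Matrix.rank_mul_le_right _ _
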